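/- Let C be an abelian monoidal category whose tensor product is additive and exact in each variable. Let λ, μ be half-braidings on objects X, Y of C respectively, and let f : X → Y be a morphism that intertwines λ and μ. Then there exists a unique half-braiding κ on the kernel K = ker f such that the kernel inclusion ι : K → X intertwines κ and λ, i.e. κ_A ≫ (ι ⊗ id_A) = (id_A ⊗ ι) ≫ λ_A for every object A. -/

import Mathlib

open CategoryTheory CategoryTheory.Limits CategoryTheory.MonoidalCategory

universe v u

/-- In an abelian monoidal category whose tensor product is additive and
exact in each variable, a morphism `f : X ⟶ Y` in the Drinfeld center (i.e. intertwining
half-braidings `l` on `X` and `m` on `Y`) induces a unique half-braiding `κ` on `kernel f`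
making the kernel inclusion `kernel.ι f` intertwine `κ` and `l`. -/
theorem kernel_halfBraiding_exists_unique
    {C : Type u} [Category.{v} C] [MonoidalCategory C] [Abelian C]
    [∀ A : C, (tensorLeft A).Additive] [∀ A : C, (tensorRight A).Additive]
    (hkerL : ∀ (A : C) ⦃X Y : C⦄ (f : X ⟶ Y),
      PreservesLimit (parallelPair f 0) (tensorLeft A))
    (hkerR : ∀ (A : C) ⦃X Y : C⦄ (f : X ⟶ Y),
      PreservesLimit (parallelPair f 0) (tensorRight A))
    (hcokerL : ∀ (A : C) ⦃X Y : C⦄ (f : X ⟶ Y),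
      PreservesColimit (parallelPair f 0) (tensorLeft A))
    (hcokerR : ∀ (A : C) ⦃X Y : C⦄ (f : X ⟶ Y),
      PreservesColimit (parallelPair f 0) (tensorRight A))
    {X Y : C} (l : HalfBraiding X) (m : HalfBraiding Y) (f : X ⟶ Y)
    (hf : ∀ A : C, (f ▷ A) ≫ (m.β A).hom = (l.β A).hom ≫ (A ◁ f)) :
    ∃! κ : HalfBraiding (kernel f),
      ∀ A : C, (kernel.ι f ▷ A) ≫ (l.β A).hom = (κ.β A).hom ≫ (A ◁ kernel.ι f) := by
  classical
  -- whiskering kills zero morphisms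
  have wR0 : ∀ (A : C) {P Q : C}, (0 : P ⟶ Q) ▷ A = 0 := by
    intro A P Q
    have := (tensorRight A).map_zero P Q
    simpa using this
  have wL0 : ∀ (A : C) {P Q : C}, A ◁ (0 : P ⟶ Q) = 0 := by
    intro A P Q
    have := (tensorLeft A).map_zero P Q
    simpa using this
  -- monomorphisms
  have hmonoL : ∀ A : C, Mono (A ◁ kernel.ι f) := by
    intro A
    haveI := hkerL A f
    have h : A ◁ kernel.ι f
        = kernelComparison f (tensorLeft A) ≫ kernel.ι ((tensorLeft A).map f) := by
      rw [kernelComparison_comp_ι]; simp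
    rw [h]; infer_instance
  have hmonoR : ∀ A : C, Mono (kernel.ι f ▷ A) := by
    intro A
    haveI := hkerR A f
    have h : kernel.ι f ▷ A
        = kernelComparison f (tensorRight A) ≫ kernel.ι ((tensorRight A).map f) := by
      rw [kernelComparison_comp_ι]; simp
    rw [h]; infer_instance
  -- kernel conditions
  have hzeroL : ∀ A : C,
      ((kernel.ι f ▷ A) ≫ (l.β A).hom) ≫ (tensorLeft A).map f = 0 := by
    intro A
    simp only [curriedTensor_obj_map, Category.assoc, ← hf A, ← comp_whiskerRight_assoc,
      kernel.condition]
    rw [wR0, zero_comp]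
  have hzeroR : ∀ A : C,
      ((A ◁ kernel.ι f) ≫ (l.β A).inv) ≫ (tensorRight A).map f = 0 := by
    intro A
    have h : (l.β A).inv ≫ (f ▷ A) = (A ◁ f) ≫ (m.β A).inv := by
      rw [Iso.inv_comp_eq, ← Category.assoc, ← hf A, Category.assoc, Iso.hom_inv_id,
        Category.comp_id]
    simp only [Functor.flip_obj_map, curriedTensor_map_app, Category.assoc, h, ← MonoidalCategory.whiskerLeft_comp_assoc,
      kernel.condition]
    rw [wL0, zero_comp]
  -- construction of the two directions, kept opaque
  obtain ⟨κhom, hκhom⟩ : ∃ k : ∀ A : C, kernel f ⊗ A ⟶ A ⊗ kernel f,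
      ∀ A : C, k A ≫ (A ◁ kernel.ι f) = (kernel.ι f ▷ A) ≫ (l.β A).hom := by
    refine ⟨fun A =>
      haveI := hkerL A f
      kernel.lift ((tensorLeft A).map f) ((kernel.ι f ▷ A) ≫ (l.β A).hom) (hzeroL A) ≫
        inv (kernelComparison f (tensorLeft A)), fun A => ?_⟩
    haveI := hkerL A f
    have h : inv (kernelComparison f (tensorLeft A)) ≫ (A ◁ kernel.ι f)
        = kernel.ι ((tensorLeft A).map f) := by
      rw [IsIso.inv_comp_eq, kernelComparison_comp_ι]; simp
    rw [Category.assoc, h, kernel.lift_ι]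
  obtain ⟨κinv, hκinv⟩ : ∃ k : ∀ A : C, A ⊗ kernel f ⟶ kernel f ⊗ A,
      ∀ A : C, k A ≫ (kernel.ι f ▷ A) = (A ◁ kernel.ι f) ≫ (l.β A).inv := by
    refine ⟨fun A =>
      haveI := hkerR A f
      kernel.lift ((tensorRight A).map f) ((A ◁ kernel.ι f) ≫ (l.β A).inv) (hzeroR A) ≫
        inv (kernelComparison f (tensorRight A)), fun A => ?_⟩
    haveI := hkerR A f
    have h : inv (kernelComparison f (tensorRight A)) ≫ (kernel.ι f ▷ A)
        = kernel.ι ((tensorRight A).map f) := by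
      rw [IsIso.inv_comp_eq, kernelComparison_comp_ι]; simp
    rw [Category.assoc, h, kernel.lift_ι]
  -- the isomorphisms
  have hhi : ∀ A : C, κhom A ≫ κinv A = 𝟙 _ := by
    intro A
    haveI := hmonoR A
    rw [← cancel_mono (kernel.ι f ▷ A), Category.assoc, hκinv, ← Category.assoc, hκhom,
      Category.assoc, Iso.hom_inv_id, Category.comp_id, Category.id_comp]
  have hih : ∀ A : C, κinv A ≫ κhom A = 𝟙 _ := by
    intro A
    haveI := hmonoL A
    rw [← cancel_mono (A ◁ kernel.ι f), Category.assoc, hκhom, ← Category.assoc, hκinv,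
      Category.assoc, Iso.inv_hom_id, Category.comp_id, Category.id_comp]
  -- the half-braiding
  refine ⟨{ β := fun A => ⟨κhom A, κinv A, hhi A, hih A⟩
            monoidal := ?_
            naturality := ?_ }, fun A => (hκhom A).symm, ?_⟩
  · intro U U'
    haveI := hmonoL (U ⊗ U')
    dsimp only
    rw [← cancel_mono ((U ⊗ U') ◁ kernel.ι f)]
    calc κhom (U ⊗ U') ≫ (U ⊗ U') ◁ kernel.ι f
        = (kernel.ι f ▷ (U ⊗ U')) ≫ (l.β (U ⊗ U')).hom := hκhom _
      _ = (kernel.ι f ▷ (U ⊗ U')) ≫ (α_ _ _ _).inv ≫ ((l.β U).hom ▷ U') ≫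
            (α_ _ _ _).hom ≫ (U ◁ (l.β U').hom) ≫ (α_ _ _ _).inv := by
          rw [l.monoidal]
      _ = (α_ _ _ _).inv ≫ ((kernel.ι f ▷ U) ▷ U') ≫ ((l.β U).hom ▷ U') ≫
            (α_ _ _ _).hom ≫ (U ◁ (l.β U').hom) ≫ (α_ _ _ _).inv := by
          rw [associator_inv_naturality_left_assoc]
      _ = (α_ _ _ _).inv ≫ ((κhom U ≫ (U ◁ kernel.ι f)) ▷ U') ≫
            (α_ _ _ _).hom ≫ (U ◁ (l.β U').hom) ≫ (α_ _ _ _).inv := by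
          rw [hκhom U, comp_whiskerRight]
          simp only [Category.assoc]
      _ = (α_ _ _ _).inv ≫ (κhom U ▷ U') ≫ (α_ _ _ _).hom ≫
            (U ◁ (kernel.ι f ▷ U')) ≫ (U ◁ (l.β U').hom) ≫ (α_ _ _ _).inv := by
          rw [comp_whiskerRight]
          simp only [Category.assoc, associator_naturality_middle_assoc]
      _ = (α_ _ _ _).inv ≫ (κhom U ▷ U') ≫ (α_ _ _ _).hom ≫
            (U ◁ (κhom U' ≫ (U' ◁ kernel.ι f))) ≫ (α_ _ _ _).inv := by
          rw [← MonoidalCategory.whiskerLeft_comp_assoc, ← hκhom U']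
      _ = ((α_ _ _ _).inv ≫ (κhom U ▷ U') ≫ (α_ _ _ _).hom ≫
            (U ◁ κhom U') ≫ (α_ _ _ _).inv) ≫ (U ⊗ U') ◁ kernel.ι f := by
          simp only [MonoidalCategory.whiskerLeft_comp, Category.assoc,
            associator_inv_naturality_right]
  · intro U U' g
    haveI := hmonoL U'
    dsimp only
    rw [← cancel_mono (U' ◁ kernel.ι f)]
    calc (kernel f ◁ g ≫ κhom U') ≫ U' ◁ kernel.ι f
        = kernel f ◁ g ≫ (kernel.ι f ▷ U') ≫ (l.β U').hom := by
          rw [Category.assoc, hκhom]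
      _ = (kernel.ι f ▷ U) ≫ (X ◁ g) ≫ (l.β U').hom := by
          rw [← whisker_exchange_assoc]
      _ = (kernel.ι f ▷ U) ≫ (l.β U).hom ≫ (g ▷ X) := by rw [l.naturality]
      _ = κhom U ≫ (U ◁ kernel.ι f) ≫ (g ▷ X) := by
          rw [← Category.assoc, ← hκhom U, Category.assoc]
      _ = (κhom U ≫ g ▷ kernel f) ≫ U' ◁ kernel.ι f := by
          rw [whisker_exchange]
          simp only [Category.assoc]
  · intro κ' hκ'
    have hβ : ∀ A : C, (κ'.β A).hom = κhom A := by
      intro A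
      haveI := hmonoL A
      rw [← cancel_mono (A ◁ kernel.ι f), hκhom A, ← hκ' A]
    obtain ⟨β', _, _⟩ := κ'
    congr 1
    funext A
    exact Iso.ext (hβ A)
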